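/- (Optimal reverse state for the Denoising SDE, Appendix D.) Let d be a positive natural number and let x_0, x_i ∈ ℝ^d. Let λ be a nonzero real and let a > 0, c > 0. Define F(y) = ‖x_i − x_0 − e^{−c}·(y − x_0)‖² / (2·λ²·(1 − e^{−2c})) + ‖y − x_0‖² / (2·λ²·(1 − e^{−2a})). Then the unique global minimizer of F is x* = ((1 − e^{−2a})/(1 − e^{−2(a+c)}))·e^{−c}·(x_i − x_0) + x_0. -/

import Mathlib

open Real

/-- Key quadratic lemma: if `(α q² + β) t = α q` with `α, β > 0`, then `t • v` is the strict
global minimizer of `u ↦ α‖v - q•u‖² + β‖u‖²`. -/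
lemma denoising_quadratic_key {E : Type*} [NormedAddCommGroup E] [InnerProductSpace ℝ E]
    (α β q t : ℝ) (hα : 0 < α) (hβ : 0 < β) (ht : (α * q ^ 2 + β) * t = α * q)
    (u v : E) (hne : u ≠ t • v) :
    α * ‖v - q • (t • v)‖ ^ 2 + β * ‖t • v‖ ^ 2 < α * ‖v - q • u‖ ^ 2 + β * ‖u‖ ^ 2 := by
  have h1 : ‖v - q • u‖ ^ 2 = ‖v‖ ^ 2 - 2 * (q * inner ℝ v u) + q ^ 2 * ‖u‖ ^ 2 := by
    rw [norm_sub_sq_real, real_inner_smul_right, norm_smul]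
    simp [Real.norm_eq_abs]
    rw [mul_pow, sq_abs]
  have h2 : ‖u - t • v‖ ^ 2 = ‖u‖ ^ 2 - 2 * (t * inner ℝ v u) + t ^ 2 * ‖v‖ ^ 2 := by
    rw [norm_sub_sq_real, real_inner_smul_right, real_inner_comm, norm_smul]
    simp [Real.norm_eq_abs]
    rw [mul_pow, sq_abs]
  have h3 : ‖v - q • (t • v)‖ ^ 2 = (1 - q * t) ^ 2 * ‖v‖ ^ 2 := by
    rw [smul_smul, show v - (q * t) • v = (1 - q * t) • v by
      rw [sub_smul, one_smul], norm_smul]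
    simp [Real.norm_eq_abs, mul_pow, sq_abs]
  have h4 : ‖t • v‖ ^ 2 = t ^ 2 * ‖v‖ ^ 2 := by
    rw [norm_smul]
    simp [Real.norm_eq_abs, mul_pow, sq_abs]
  have hpos : 0 < ‖u - t • v‖ ^ 2 := by
    have h0 : u - t • v ≠ 0 := sub_ne_zero.mpr hne
    exact pow_pos (norm_pos_iff.mpr h0) 2
  have key : α * ‖v - q • u‖ ^ 2 + β * ‖u‖ ^ 2 =
      α * ‖v - q • (t • v)‖ ^ 2 + β * ‖t • v‖ ^ 2 +
        (α * q ^ 2 + β) * ‖u - t • v‖ ^ 2 := by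
    rw [h1, h2, h3, h4]
    linear_combination (2 * (inner ℝ v u : ℝ) - 2 * t * ‖v‖ ^ 2) * ht
  nlinarith [mul_pos (by positivity : (0:ℝ) < α * q ^ 2 + β) hpos]

/-- Optimal reverse state for the Denoising SDE (Appendix D): the unique global minimizer
of `F(y) = ‖x_i − x_0 − e^{−c}(y − x_0)‖²/(2λ²(1 − e^{−2c})) + ‖y − x_0‖²/(2λ²(1 − e^{−2a}))`
is `x* = ((1 − e^{−2a})/(1 − e^{−2(a+c)}))·e^{−c}·(x_i − x_0) + x_0`. -/
theorem denoising_sde_optimal_reverse_state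
    (d : ℕ) (hd : 0 < d) (x0 xi : EuclideanSpace ℝ (Fin d))
    (lam : ℝ) (hlam : lam ≠ 0) (a c : ℝ) (ha : 0 < a) (hc : 0 < c)
    (F : EuclideanSpace ℝ (Fin d) → ℝ)
    (hF : ∀ y, F y =
      ‖xi - x0 - Real.exp (-c) • (y - x0)‖ ^ 2 / (2 * lam ^ 2 * (1 - Real.exp (-(2 * c)))) +
      ‖y - x0‖ ^ 2 / (2 * lam ^ 2 * (1 - Real.exp (-(2 * a)))))
    (xstar : EuclideanSpace ℝ (Fin d))
    (hxstar : xstar =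
      ((1 - Real.exp (-(2 * a))) / (1 - Real.exp (-(2 * (a + c))))) •
        (Real.exp (-c) • (xi - x0)) + x0) :
    ∀ y, y ≠ xstar → F xstar < F y := by
  intro y hy
  set q : ℝ := Real.exp (-c) with hqdef
  set A : ℝ := Real.exp (-(2 * a)) with hAdef
  have hq : 0 < q := Real.exp_pos _
  have hA : 0 < A := Real.exp_pos _
  have hA1 : A < 1 := by
    rw [hAdef, ← Real.exp_zero]; exact Real.exp_lt_exp.mpr (by linarith)
  have hqc : Real.exp (-(2 * c)) = q ^ 2 := by
    rw [hqdef, sq, ← Real.exp_add]; ring_nf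
  have hq1 : q ^ 2 < 1 := by
    rw [← hqc, ← Real.exp_zero]; exact Real.exp_lt_exp.mpr (by linarith)
  have hq0 : 0 < q ^ 2 := by positivity
  have hAq1 : A * q ^ 2 < 1 := by nlinarith
  have hac : Real.exp (-(2 * (a + c))) = A * q ^ 2 := by
    rw [hAdef, ← hqc, ← Real.exp_add]; ring_nf
  have hlam2 : 0 < lam ^ 2 := by positivity
  set α : ℝ := 1 / (2 * lam ^ 2 * (1 - q ^ 2)) with hαdef
  set β : ℝ := 1 / (2 * lam ^ 2 * (1 - A)) with hβdef
  have hq1' : (0:ℝ) < 1 - q ^ 2 := by linarith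
  have hA1' : (0:ℝ) < 1 - A := by linarith
  have hα : 0 < α := by rw [hαdef]; positivity
  have hβ : 0 < β := by rw [hβdef]; positivity
  set t : ℝ := (1 - A) / (1 - A * q ^ 2) * q with htdef
  have ht : (α * q ^ 2 + β) * t = α * q := by
    rw [hαdef, hβdef, htdef]
    have h1 : (1 : ℝ) - q ^ 2 ≠ 0 := by nlinarith
    have h2 : (1 : ℝ) - A ≠ 0 := by linarith
    have h3 : (1 : ℝ) - A * q ^ 2 ≠ 0 := by nlinarith
    field_simp
    ring_nf
    have h3' : (1 : ℝ) - q ^ 2 * A ≠ 0 := by nlinarith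
    field_simp
    ring
  have hxs : xstar - x0 = t • (xi - x0) := by
    rw [hxstar, hac, htdef]
    simp [smul_smul]
  have hFy : ∀ z : EuclideanSpace ℝ (Fin d),
      F z = α * ‖xi - x0 - q • (z - x0)‖ ^ 2 + β * ‖z - x0‖ ^ 2 := by
    intro z
    rw [hF z, hqc, hαdef, hβdef]
    ring
  rw [hFy, hFy]
  have hsub : ∀ z : EuclideanSpace ℝ (Fin d),
      xi - x0 - q • (z - x0) = (xi - x0) - q • (z - x0) := fun z => rfl
  rw [show xstar - x0 = t • (xi - x0) from hxs]
  have hne : y - x0 ≠ t • (xi - x0) := by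
    intro h
    apply hy
    have h' : y - x0 = xstar - x0 := by rw [h, ← hxs]
    exact sub_left_injective h'
  exact denoising_quadratic_key α β q t hα hβ ht (y - x0) (xi - x0) hne
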